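/- arXiv:1207.3749 — 2 statements merged into one kernel-verified Lean document; each statement's English description precedes it below -/
import Mathlib

section
/- Let P₁, P₂ be real numbers with P₁² + P₂² > 1 and P₂ ≠ 0, set s = √(P₁² + P₂² − 1), w(L) = 1 + P₁·sin L + P₂·cos L, and u(L) = (P₁ − (P₂ − 1)·tan(L/2))/s. Let L be a real number with cos(L/2) ≠ 0 and |u(L)| < 1. Then the function F(L) = (2/s³)·artanh(u(L)) + (P₁ + (P₁² + P₂²)·sin L)/(P₂·(P₁² + P₂² − 1)·w(L)) is differentiable at L with derivative F′(L) = 1/w(L)². -/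
open Real

/-- The inverse hyperbolic tangent, `artanh x = ½ log((1+x)/(1−x))`. -/
noncomputable def Real.artanh' (x : ℝ) : ℝ := (1 / 2) * Real.log ((1 + x) / (1 - x))

set_option maxHeartbeats 1000000 in
/-- Closed-form antiderivative of `I₁₂`: with `s = √(P₁² + P₂² - 1)`,
`w(L) = 1 + P₁ sin L + P₂ cos L` and `u(L) = (P₁ - (P₂ - 1) tan(L/2))/s`, the
function `F(L) = (2/s³)·artanh(u(L)) + (P₁ + (P₁² + P₂²) sin L)/(P₂ (P₁² + P₂² - 1) w(L))`
has derivative `1 / w(L)²` at `L`. -/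
theorem I12_antiderivative (P₁ P₂ L : ℝ) (h : 1 < P₁ ^ 2 + P₂ ^ 2) (hP₂ : P₂ ≠ 0)
    (hc : cos (L / 2) ≠ 0)
    (hu : |(P₁ - (P₂ - 1) * tan (L / 2)) / Real.sqrt (P₁ ^ 2 + P₂ ^ 2 - 1)| < 1) :
    HasDerivAt
      (fun x : ℝ =>
        (2 / Real.sqrt (P₁ ^ 2 + P₂ ^ 2 - 1) ^ 3) *
            Real.artanh' ((P₁ - (P₂ - 1) * tan (x / 2)) / Real.sqrt (P₁ ^ 2 + P₂ ^ 2 - 1)) +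
          (P₁ + (P₁ ^ 2 + P₂ ^ 2) * sin x) /
            (P₂ * (P₁ ^ 2 + P₂ ^ 2 - 1) * (1 + P₁ * sin x + P₂ * cos x)))
      (1 / (1 + P₁ * sin L + P₂ * cos L) ^ 2) L := by
  have hq : (0:ℝ) < P₁ ^ 2 + P₂ ^ 2 - 1 := by linarith
  set s : ℝ := Real.sqrt (P₁ ^ 2 + P₂ ^ 2 - 1) with hsdef
  have hs2 : s ^ 2 = P₁ ^ 2 + P₂ ^ 2 - 1 := Real.sq_sqrt hq.le
  have hs0 : 0 < s := Real.sqrt_pos.mpr hq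
  have hs0' : s ≠ 0 := ne_of_gt hs0
  set t : ℝ := tan (L / 2) with htdef
  -- basic bounds from hu
  have huu := abs_lt.mp hu
  have h1u : 0 < 1 + (P₁ - (P₂ - 1) * t) / s := by linarith [huu.1]
  have h2u : 0 < 1 - (P₁ - (P₂ - 1) * t) / s := by linarith [huu.2]
  have hNs : |P₁ - (P₂ - 1) * t| < s := by
    rwa [abs_div, abs_of_pos hs0, div_lt_one hs0] at hu
  have hN2 : (P₁ - (P₂ - 1) * t) ^ 2 < s ^ 2 := by
    have := abs_lt.mp hNs; nlinarith
  have hsN2 : s ^ 2 - (P₁ - (P₂ - 1) * t) ^ 2 ≠ 0 := by nlinarith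
  have hBs : s - (P₁ - (P₂ - 1) * t) ≠ 0 := by
    have h2 := mul_pos hs0 h2u
    rw [mul_sub, mul_one, mul_div_cancel₀ _ hs0'] at h2
    exact ne_of_gt h2
  have hAs : s + (P₁ - (P₂ - 1) * t) ≠ 0 := by
    have h2 := mul_pos hs0 h1u
    rw [mul_add, mul_one, mul_div_cancel₀ _ hs0'] at h2
    exact ne_of_gt h2
  -- half-angle formulas
  have h1t : (0:ℝ) < 1 + t ^ 2 := by positivity
  have h1t' : (1:ℝ) + t ^ 2 ≠ 0 := ne_of_gt h1t
  have hsinL : sin L = 2 * t / (1 + t ^ 2) := by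
    have hs' : sin L = 2 * sin (L/2) * cos (L/2) := by rw [← Real.sin_two_mul]; ring_nf
    rw [hs', htdef, Real.tan_eq_sin_div_cos]; field_simp
    linear_combination (sin (L/2)) * Real.sin_sq_add_cos_sq (L/2)
  have hcosL : cos L = (1 - t ^ 2) / (1 + t ^ 2) := by
    have hc' : cos L = 2 * cos (L/2) ^ 2 - 1 := by rw [← Real.cos_two_mul]; ring_nf
    rw [hc', htdef, Real.tan_eq_sin_div_cos]; field_simp
    linear_combination (2 * cos (L/2) ^ 2) * Real.sin_sq_add_cos_sq (L/2)
  have hsec : 1 / cos (L / 2) ^ 2 = 1 + t ^ 2 := by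
    rw [htdef, Real.tan_eq_sin_div_cos]; field_simp
    linear_combination (-1 : ℝ) * Real.sin_sq_add_cos_sq (L/2)
  -- P₂ ≠ 1
  have hP21 : P₂ - 1 ≠ 0 := by
    intro h0
    have hP2 : P₂ = 1 := by linarith
    have ht0 : (P₂ - 1) * t = 0 := by rw [h0]; ring
    rw [ht0, sub_zero] at hN2
    rw [hs2, hP2] at hN2
    nlinarith
  -- expression for w
  have hwsub : 1 + P₁ * sin L + P₂ * cos L =
      (s ^ 2 - (P₁ - (P₂ - 1) * t) ^ 2) / ((P₂ - 1) * (1 + t ^ 2)) := by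
    rw [hsinL, hcosL, eq_div_iff (mul_ne_zero hP21 h1t'), hs2]
    field_simp
    ring
  have hw0 : 1 + P₁ * sin L + P₂ * cos L ≠ 0 := by
    rw [hwsub]
    exact div_ne_zero hsN2 (mul_ne_zero hP21 h1t')
  -- derivative of tan (x/2)
  have hhalf : HasDerivAt (fun x : ℝ => x / 2) (1/2) L := by
    simpa using (hasDerivAt_id L).div_const 2
  have htan : HasDerivAt (fun x : ℝ => tan (x / 2)) (1 / cos (L/2) ^ 2 * (1/2)) L :=
    by have := (Real.hasDerivAt_tan hc).comp L hhalf; exact this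
  have hN' : HasDerivAt (fun x : ℝ => P₁ - (P₂ - 1) * tan (x / 2))
      (-((P₂ - 1) * (1 / cos (L/2) ^ 2 * (1/2)))) L :=
    (htan.const_mul (P₂ - 1)).const_sub P₁
  have hU : HasDerivAt (fun x : ℝ => (P₁ - (P₂ - 1) * tan (x / 2)) / s)
      (-((P₂ - 1) * (1 / cos (L/2) ^ 2 * (1/2))) / s) L := hN'.div_const s
  have hA : HasDerivAt (fun x : ℝ => 1 + (P₁ - (P₂ - 1) * tan (x / 2)) / s)
      (-((P₂ - 1) * (1 / cos (L/2) ^ 2 * (1/2))) / s) L := hU.const_add 1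
  have hB : HasDerivAt (fun x : ℝ => 1 - (P₁ - (P₂ - 1) * tan (x / 2)) / s)
      (-(-((P₂ - 1) * (1 / cos (L/2) ^ 2 * (1/2))) / s)) L := hU.const_sub 1
  have hBne : 1 - (P₁ - (P₂ - 1) * tan (L / 2)) / s ≠ 0 := by
    rw [← htdef]; exact ne_of_gt h2u
  have hQ := hA.div hB hBne
  have hQne : (1 + (P₁ - (P₂ - 1) * tan (L / 2)) / s) /
      (1 - (P₁ - (P₂ - 1) * tan (L / 2)) / s) ≠ 0 := by
    rw [← htdef]; positivity
  have hlog := hQ.log hQne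
  have hterm1 := (hlog.const_mul (1/2 : ℝ)).const_mul (2 / s ^ 3)
  -- second term
  have hnum : HasDerivAt (fun x : ℝ => P₁ + (P₁ ^ 2 + P₂ ^ 2) * sin x)
      ((P₁ ^ 2 + P₂ ^ 2) * cos L) L :=
    ((Real.hasDerivAt_sin L).const_mul (P₁ ^ 2 + P₂ ^ 2)).const_add P₁
  have hw' : HasDerivAt (fun x : ℝ => 1 + P₁ * sin x + P₂ * cos x)
      (P₁ * cos L + P₂ * (-sin L)) L :=
    (((Real.hasDerivAt_sin L).const_mul P₁).const_add 1).add
      ((Real.hasDerivAt_cos L).const_mul P₂)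
  have hden := hw'.const_mul (P₂ * (P₁ ^ 2 + P₂ ^ 2 - 1))
  have hdenne : P₂ * (P₁ ^ 2 + P₂ ^ 2 - 1) * (1 + P₁ * sin L + P₂ * cos L) ≠ 0 :=
    mul_ne_zero (mul_ne_zero hP₂ (ne_of_gt hq)) hw0
  have hterm2 := hnum.div hden hdenne
  have total := hterm1.add hterm2
  -- the two value identities
  have E1 : 2 / s ^ 3 *
      (1 / 2 *
        ((-((P₂ - 1) * (1 / cos (L/2) ^ 2 * (1/2))) / s *
              (1 - (P₁ - (P₂ - 1) * tan (L / 2)) / s) -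
            (1 + (P₁ - (P₂ - 1) * tan (L / 2)) / s) *
              -(-((P₂ - 1) * (1 / cos (L/2) ^ 2 * (1/2))) / s)) /
            (1 - (P₁ - (P₂ - 1) * tan (L / 2)) / s) ^ 2 /
          ((1 + (P₁ - (P₂ - 1) * tan (L / 2)) / s) /
            (1 - (P₁ - (P₂ - 1) * tan (L / 2)) / s)))) =
      -(1 / ((P₁ ^ 2 + P₂ ^ 2 - 1) * (1 + P₁ * sin L + P₂ * cos L))) := by
    rw [← htdef, hsec, hwsub, ← hs2]
    field_simp
    ring
  have E2 : ((P₁ ^ 2 + P₂ ^ 2) * cos L * (P₂ * (P₁ ^ 2 + P₂ ^ 2 - 1) * (1 + P₁ * sin L + P₂ * cos L)) -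
        (P₁ + (P₁ ^ 2 + P₂ ^ 2) * sin L) * (P₂ * (P₁ ^ 2 + P₂ ^ 2 - 1) * (P₁ * cos L + P₂ * (-sin L)))) /
        (P₂ * (P₁ ^ 2 + P₂ ^ 2 - 1) * (1 + P₁ * sin L + P₂ * cos L)) ^ 2 =
      1 / (1 + P₁ * sin L + P₂ * cos L) ^ 2 +
        1 / ((P₁ ^ 2 + P₂ ^ 2 - 1) * (1 + P₁ * sin L + P₂ * cos L)) := by
    have key2 : (P₁ ^ 2 + P₂ ^ 2) * cos L * (P₂ * (P₁ ^ 2 + P₂ ^ 2 - 1) * (1 + P₁ * sin L + P₂ * cos L)) -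
        (P₁ + (P₁ ^ 2 + P₂ ^ 2) * sin L) * (P₂ * (P₁ ^ 2 + P₂ ^ 2 - 1) * (P₁ * cos L + P₂ * (-sin L))) =
        P₂ * (P₁ ^ 2 + P₂ ^ 2 - 1) *
          (P₂ * ((1 + P₁ * sin L + P₂ * cos L) + (P₁ ^ 2 + P₂ ^ 2 - 1))) := by
      linear_combination (P₂ ^ 2 * (P₁ ^ 2 + P₂ ^ 2 - 1) * (P₁ ^ 2 + P₂ ^ 2)) *
        Real.sin_sq_add_cos_sq L
    rw [key2]
    field_simp
    ring
  simp only [Real.artanh']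
  refine total.congr_deriv ?_
  simp only [Pi.div_apply]
  linear_combination E1 + E2
end

section
/- Let P₁, P₂ be real numbers with P₁² + P₂² > 1, set s = √(P₁² + P₂² − 1), w(L) = 1 + P₁·sin L + P₂·cos L, and u(L) = (P₁ − (P₂ − 1)·tan(L/2))/s. Let L be a real number with cos(L/2) ≠ 0 and |u(L)| < 1. Then the function F(L) = −(2·P₂/s³)·artanh(u(L)) − (P₁ + sin L)/((P₁² + P₂² − 1)·w(L)) is differentiable at L with derivative F′(L) = cos L / w(L)². -/
open Real

lemma hasDerivAt_artanh (x : ℝ) (hx : |x| < 1) :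
    HasDerivAt Real.artanh' (1 / (1 - x ^ 2)) x := by
  obtain ⟨h1, h2⟩ := abs_lt.mp hx
  have hp : 0 < 1 + x := by linarith
  have hm : 0 < 1 - x := by linarith
  have hq : HasDerivAt (fun y : ℝ => (1 + y) / (1 - y))
      ((1 * (1 - x) - (1 + x) * (-1)) / (1 - x) ^ 2) x := by
    exact ((hasDerivAt_id x).const_add 1).div ((hasDerivAt_id x).const_sub 1) hm.ne'
  have hq0 : (1 + x) / (1 - x) ≠ 0 := by positivity
  have := (hq.log hq0).const_mul (1/2 : ℝ)
  refine this.congr_deriv ?_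
  have h12 : (1:ℝ) - x ^ 2 ≠ 0 := by nlinarith
  field_simp
  ring

set_option maxHeartbeats 1000000 in
/-- Closed-form antiderivative of `I_c2`: with `s = √(P₁² + P₂² - 1)`,
`w(L) = 1 + P₁ sin L + P₂ cos L` and `u(L) = (P₁ - (P₂ - 1) tan(L/2))/s`, the
function `F(L) = -(2P₂/s³)·artanh(u(L)) - (P₁ + sin L)/((P₁² + P₂² - 1) w(L))`
has derivative `cos L / w(L)²` at `L`. -/
theorem Ic2_antiderivative (P₁ P₂ L : ℝ) (h : 1 < P₁ ^ 2 + P₂ ^ 2)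
    (hc : cos (L / 2) ≠ 0)
    (hu : |(P₁ - (P₂ - 1) * tan (L / 2)) / Real.sqrt (P₁ ^ 2 + P₂ ^ 2 - 1)| < 1) :
    HasDerivAt
      (fun x : ℝ =>
        -(2 * P₂ / Real.sqrt (P₁ ^ 2 + P₂ ^ 2 - 1) ^ 3) *
            Real.artanh' ((P₁ - (P₂ - 1) * tan (x / 2)) / Real.sqrt (P₁ ^ 2 + P₂ ^ 2 - 1)) -
          (P₁ + sin x) / ((P₁ ^ 2 + P₂ ^ 2 - 1) * (1 + P₁ * sin x + P₂ * cos x)))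
      (cos L / (1 + P₁ * sin L + P₂ * cos L) ^ 2) L := by
  set s := Real.sqrt (P₁ ^ 2 + P₂ ^ 2 - 1) with hs_def
  have hs2pos : (0:ℝ) < P₁ ^ 2 + P₂ ^ 2 - 1 := by linarith
  have hspos : 0 < s := Real.sqrt_pos.mpr hs2pos
  have hs2 : s ^ 2 = P₁ ^ 2 + P₂ ^ 2 - 1 := Real.sq_sqrt hs2pos.le
  have hsne : s ≠ 0 := hspos.ne'
  set t := tan (L / 2) with ht_def
  set u := (P₁ - (P₂ - 1) * t) / s with hu_def
  set si := sin (L / 2) with hsi_def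
  set co := cos (L / 2) with hco_def
  have hpy : si ^ 2 + co ^ 2 = 1 := sin_sq_add_cos_sq _
  have htan : t = si / co := tan_eq_sin_div_cos _
  have hsinL : sin L = 2 * si * co := by
    rw [hsi_def, hco_def, ← sin_two_mul]; ring_nf
  have hcosL : cos L = co ^ 2 - si ^ 2 := by
    rw [hsi_def, hco_def, ← Real.cos_two_mul']; ring_nf
  set w := 1 + P₁ * sin L + P₂ * cos L with hw_def
  have hu_eq : u = (P₁ * co - (P₂ - 1) * si) / (s * co) := by
    rw [hu_def, htan]; field_simp
  -- key identity: (1-u²) s² co² = (P₂-1) w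
  have hkey : (1 - u ^ 2) * s ^ 2 * co ^ 2 = (P₂ - 1) * w := by
    rw [hu_eq, hw_def, hsinL, hcosL]
    have hsq : ((P₁ * co - (P₂ - 1) * si) / (s * co)) ^ 2 * (s ^ 2 * co ^ 2)
        = (P₁ * co - (P₂ - 1) * si) ^ 2 := by
      field_simp
    linear_combination co ^ 2 * hs2 + (P₂ - 1) * hpy - hsq
  have h1u : 0 < 1 - u ^ 2 := by
    have := abs_lt.mp hu
    nlinarith [this.1, this.2]
  have hco2 : (0:ℝ) < co ^ 2 := by positivity
  have hposkey : 0 < (1 - u ^ 2) * s ^ 2 * co ^ 2 :=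
    mul_pos (mul_pos h1u (pow_pos hspos 2)) hco2
  have hP2 : P₂ - 1 ≠ 0 := by
    intro h0
    rw [h0, zero_mul] at hkey
    linarith
  have hwne : w ≠ 0 := by
    intro h0
    rw [h0, mul_zero] at hkey
    linarith
  have hs2w : (P₁ ^ 2 + P₂ ^ 2 - 1) * w ≠ 0 := mul_ne_zero (by positivity) hwne
  -- derivatives
  have hhalf : HasDerivAt (fun x : ℝ => x / 2) (1 / 2) L := (hasDerivAt_id L).div_const 2
  have htand : HasDerivAt (fun x : ℝ => tan (x / 2)) (1 / co ^ 2 * (1 / 2)) L :=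
    (Real.hasDerivAt_tan (x := L / 2) hc).comp (h := fun x : ℝ => x / 2) L hhalf
  have hg : HasDerivAt (fun x : ℝ => (P₁ - (P₂ - 1) * tan (x / 2)) / s)
      (-((P₂ - 1) * (1 / co ^ 2 * (1 / 2))) / s) L :=
    ((htand.const_mul (P₂ - 1)).const_sub P₁).div_const s
  have hA : HasDerivAt
      (fun x : ℝ => -(2 * P₂ / s ^ 3) *
        Real.artanh' ((P₁ - (P₂ - 1) * tan (x / 2)) / s))
      (-(2 * P₂ / s ^ 3) * (1 / (1 - u ^ 2) * (-((P₂ - 1) * (1 / co ^ 2 * (1 / 2))) / s))) L :=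
    (((hasDerivAt_artanh u hu).comp L hg)).const_mul _
  have hN : HasDerivAt (fun x : ℝ => P₁ + sin x) (cos L) L :=
    (Real.hasDerivAt_sin L).const_add P₁
  have hwD : HasDerivAt (fun x : ℝ => 1 + P₁ * sin x + P₂ * cos x)
      (P₁ * cos L + P₂ * (-sin L)) L := by
    have := (((Real.hasDerivAt_sin L).const_mul P₁).const_add 1).add
      ((Real.hasDerivAt_cos L).const_mul P₂)
    exact this.congr_deriv (by ring)
  have hD : HasDerivAt (fun x : ℝ => (P₁ ^ 2 + P₂ ^ 2 - 1) * (1 + P₁ * sin x + P₂ * cos x))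
      ((P₁ ^ 2 + P₂ ^ 2 - 1) * (P₁ * cos L + P₂ * (-sin L))) L :=
    hwD.const_mul _
  have hB : HasDerivAt
      (fun x : ℝ => (P₁ + sin x) / ((P₁ ^ 2 + P₂ ^ 2 - 1) * (1 + P₁ * sin x + P₂ * cos x)))
      ((cos L * ((P₁ ^ 2 + P₂ ^ 2 - 1) * w) -
        (P₁ + sin L) * ((P₁ ^ 2 + P₂ ^ 2 - 1) * (P₁ * cos L + P₂ * (-sin L)))) /
        ((P₁ ^ 2 + P₂ ^ 2 - 1) * w) ^ 2) L := hN.div hD hs2w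
  have hAB := hA.sub hB
  refine hAB.congr_deriv (Eq.symm ?_)
  -- first term simplifies to P₂/((P₁²+P₂²-1) w)
  have h1u' : (1:ℝ) - u ^ 2 ≠ 0 := h1u.ne'
  have hA' : -(2 * P₂ / s ^ 3) * (1 / (1 - u ^ 2) * (-((P₂ - 1) * (1 / co ^ 2 * (1 / 2))) / s))
      = P₂ / ((P₁ ^ 2 + P₂ ^ 2 - 1) * w) := by
    rw [← hs2]
    clear_value s t u si co w
    field_simp
    linear_combination (-P₂) * hkey
  rw [hA', ← hs2]
  have hpyL : sin L ^ 2 + cos L ^ 2 = 1 := sin_sq_add_cos_sq L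
  clear_value s t u si co
  field_simp
  rw [hw_def]
  linear_combination cos L * hs2 + P₂ * hpyL
end
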